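/- Let f, f_ξ : ℝ^d → ℝ be continuously differentiable, bounded below by f_inf, with Hessian similarity parameter δ ≥ 0 between f_ξ and f, and let γ ≤ 1/(4δ). Suppose x⁺ minimizes y ↦ f_ξ(y) + ⟨g − ∇f_ξ(x), y − x⟩ + (1/(2γ))‖y − x‖². Then f(x⁺) − f_inf ≤ f(x) − f_inf − (1/(4γ))‖x⁺ − x‖² + 2γ‖∇f(x) − g‖². -/

import Mathlib

open RealInnerProductSpace

private lemma descent_aux {E : Type*} [NormedAddCommGroup E] [InnerProductSpace ℝ E]
    [CompleteSpace E]
    (h : E → ℝ) (h' : E → E) (hd : ∀ z, HasGradientAt h (h' z) z)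
    (δ : ℝ) (hL : ∀ u v, ‖h' u - h' v‖ ≤ δ * ‖u - v‖)
    (a b : E) : h b ≤ h a + ⟪h' a, b - a⟫ + δ / 2 * ‖b - a‖ ^ 2 := by
  set s : E := b - a with hs
  set C : ℝ := ⟪h' a, s⟫ with hC
  set D : ℝ := δ / 2 * ‖s‖ ^ 2 with hD
  set g : ℝ → ℝ := fun t => h (a + t • s) - t * C - t ^ 2 * D with hgdef
  have key : ∀ t : ℝ, HasDerivAt (fun t : ℝ => h (a + t • s)) ⟪h' (a + t • s), s⟫ t := by
    intro t
    have hc : HasDerivAt (fun t : ℝ => a + t • s) s t := by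
      simpa using ((hasDerivAt_id t).smul_const s).const_add a
    have := ((hd (a + t • s)).hasFDerivAt).comp_hasDerivAt t hc
    simpa [InnerProductSpace.toDual_apply_apply, Function.comp_def] using this
  have hg : ∀ t : ℝ, HasDerivAt g (⟪h' (a + t • s), s⟫ - C - 2 * t * D) t := by
    intro t
    have h1 : HasDerivAt (fun t : ℝ => t * C) C t := by
      simpa using (hasDerivAt_id t).mul_const C
    have h2 : HasDerivAt (fun t : ℝ => t ^ 2 * D) (2 * t * D) t := by
      simpa [pow_one, mul_comm] using (hasDerivAt_pow 2 t).mul_const D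
    exact ((key t).sub h1).sub h2
  have mono : AntitoneOn g (Set.Icc (0:ℝ) 1) := by
    apply antitoneOn_of_deriv_nonpos (convex_Icc 0 1)
    · exact (Differentiable.continuous fun t => (hg t).differentiableAt).continuousOn
    · intro t _
      exact ((hg t).differentiableAt).differentiableWithinAt
    · intro t ht
      rw [interior_Icc] at ht
      rw [(hg t).deriv]
      have hsub : a + t • s - a = t • s := by abel
      have h1 : ⟪h' (a + t • s) - h' a, s⟫ ≤ δ * (t * ‖s‖) * ‖s‖ := by
        calc ⟪h' (a + t • s) - h' a, s⟫ ≤ ‖h' (a + t • s) - h' a‖ * ‖s‖ :=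
              real_inner_le_norm _ _
          _ ≤ (δ * ‖a + t • s - a‖) * ‖s‖ := by
              gcongr; exact hL _ _
          _ = δ * (t * ‖s‖) * ‖s‖ := by
              rw [hsub, norm_smul, Real.norm_eq_abs, abs_of_pos ht.1]
      have h2 : ⟪h' (a + t • s), s⟫ - C = ⟪h' (a + t • s) - h' a, s⟫ := by
        rw [inner_sub_left]
      rw [hD]
      nlinarith [h1, h2]
  have h01 : g 1 ≤ g 0 := mono (by norm_num) (by norm_num) (by norm_num)
  have e1 : a + (1:ℝ) • s = b := by rw [one_smul, hs]; abel
  have e0 : a + (0:ℝ) • s = a := by simp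
  simp only [hgdef, e1, e0, one_pow, one_mul] at h01
  simp only [hC, hD] at h01
  linarith

theorem spam_descent_lemma {d : ℕ}
    (f fξ : EuclideanSpace ℝ (Fin d) → ℝ) (finf : ℝ)
    (hf : ContDiff ℝ 1 f) (hfξ : ContDiff ℝ 1 fξ)
    (hbdd : ∀ z, finf ≤ f z)
    (δ γ : ℝ) (hδ : 0 ≤ δ) (hγ : 0 < γ) (hγδ : 4 * γ * δ ≤ 1)
    (hsim : ∀ u v : EuclideanSpace ℝ (Fin d),
      ‖gradient fξ u - gradient f u - gradient fξ v + gradient f v‖ ≤ δ * ‖u - v‖)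
    (x g xplus : EuclideanSpace ℝ (Fin d))
    (hmin : ∀ y : EuclideanSpace ℝ (Fin d),
      fξ xplus + ⟪g - gradient fξ x, xplus - x⟫ + (1 / (2 * γ)) * ‖xplus - x‖ ^ 2
        ≤ fξ y + ⟪g - gradient fξ x, y - x⟫ + (1 / (2 * γ)) * ‖y - x‖ ^ 2) :
    f xplus - finf ≤ f x - finf - (1 / (4 * γ)) * ‖xplus - x‖ ^ 2
      + 2 * γ * ‖gradient f x - g‖ ^ 2 := by
  set h : EuclideanSpace ℝ (Fin d) → ℝ := fun z => f z - fξ z with hh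
  set h' : EuclideanSpace ℝ (Fin d) → EuclideanSpace ℝ (Fin d) :=
    fun z => gradient f z - gradient fξ z with hh'
  have hd : ∀ z, HasGradientAt h (h' z) z := by
    intro z
    have h1 : HasGradientAt f (gradient f z) z :=
      ((hf.differentiable one_ne_zero) z).hasGradientAt
    have h2 : HasGradientAt fξ (gradient fξ z) z :=
      ((hfξ.differentiable one_ne_zero) z).hasGradientAt
    have := h1.hasFDerivAt.sub h2.hasFDerivAt
    rw [hasGradientAt_iff_hasFDerivAt]
    simpa [hh, hh', map_sub, Pi.sub_def] using this
  have hL : ∀ u v, ‖h' u - h' v‖ ≤ δ * ‖u - v‖ := by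
    intro u v
    have := hsim u v
    have heq : gradient fξ u - gradient f u - gradient fξ v + gradient f v
        = -(h' u - h' v) := by rw [hh']; simp only []; abel
    rw [heq, norm_neg] at this
    exact this
  have hdesc := descent_aux h h' hd δ hL x xplus
  have hminx := hmin x
  simp only [sub_self, inner_zero_right, norm_zero] at hminx
  set s : EuclideanSpace ℝ (Fin d) := xplus - x with hsdef
  -- combine
  have hinner : ⟪h' x, s⟫ - ⟪g - gradient fξ x, s⟫ = ⟪gradient f x - g, s⟫ := by
    rw [hh', ← inner_sub_left]
    congr 1
    simp only []
    abel
  have young : ⟪gradient f x - g, s⟫ ≤ 2 * γ * ‖gradient f x - g‖ ^ 2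
      + 1 / (8 * γ) * ‖s‖ ^ 2 := by
    have h1 : ⟪gradient f x - g, s⟫ ≤ ‖gradient f x - g‖ * ‖s‖ := real_inner_le_norm _ _
    have key : ‖gradient f x - g‖ * ‖s‖ * (8 * γ)
        ≤ (2 * γ * ‖gradient f x - g‖ ^ 2 + 1 / (8 * γ) * ‖s‖ ^ 2) * (8 * γ) := by
      have e : (1 / (8 * γ) * ‖s‖ ^ 2) * (8 * γ) = ‖s‖ ^ 2 := by field_simp
      nlinarith [sq_nonneg (4 * γ * ‖gradient f x - g‖ - ‖s‖)]
    have key2 := le_of_mul_le_mul_right key (by positivity : (0:ℝ) < 8 * γ)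
    linarith
  have hδγ : δ ≤ 1 / (4 * γ) := by
    rw [le_div_iff₀ (by positivity)]
    linarith
  have hkey : f xplus ≤ f x + ⟪gradient f x - g, s⟫
      + (δ / 2 - 1 / (2 * γ)) * ‖s‖ ^ 2 := by
    have := hdesc
    simp only [hh] at this
    nlinarith [hminx, this, hinner]
  have hcoef : δ / 2 - 1 / (2 * γ) + 1 / (8 * γ) ≤ -(1 / (4 * γ)) := by
    have e : -(1 / (4 * γ)) - (δ / 2 - 1 / (2 * γ) + 1 / (8 * γ))
        = (1 - 4 * γ * δ) / (8 * γ) := by field_simp; ring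
    have hpos : 0 ≤ (1 - 4 * γ * δ) / (8 * γ) :=
      div_nonneg (by linarith) (by positivity)
    linarith
  have hsn : 0 ≤ ‖s‖ ^ 2 := by positivity
  nlinarith [hkey, young, mul_le_mul_of_nonneg_right hcoef hsn, hbdd xplus]
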